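/- Let f : [0, T] → [0, ∞) be continuous with f(0) ≤ ε, and suppose there are constants C₀ > 0 and a nonnegative integrable function g on [0,T] such that for all t ∈ [0,T], f(t) + ∫₀ᵗ (C₀ − C f(τ)^{1/2}) g(τ) dτ ≤ f(0). If Cε^{1/2} ≤ C₀/2, then f(t) ≤ ε and ∫₀ᵗ g(τ) dτ ≤ 2ε/C₀ for all t ∈ [0,T]. -/

import Mathlib

open MeasureTheory

/-- Abstract bootstrap (continuity) argument. -/
theorem bootstrap_argument (T ε C₀ C : ℝ) (hT : 0 < T) (hε : 0 < ε)
    (hC₀ : 0 < C₀) (hC : 0 < C) (f g : ℝ → ℝ)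
    (hfc : ContinuousOn f (Set.Icc 0 T))
    (hf0 : f 0 ≤ ε)
    (hfnn : ∀ t ∈ Set.Icc (0:ℝ) T, 0 ≤ f t)
    (hgnn : ∀ t ∈ Set.Icc (0:ℝ) T, 0 ≤ g t)
    (hgint : IntegrableOn g (Set.Icc 0 T) volume)
    (hkey : ∀ t ∈ Set.Icc (0:ℝ) T,
      f t + ∫ τ in (0:ℝ)..t, (C₀ - C * Real.sqrt (f τ)) * g τ ≤ f 0)
    (hsmall : C * Real.sqrt ε ≤ C₀ / 2) :
    ∀ t ∈ Set.Icc (0:ℝ) T, f t ≤ ε ∧ (∫ τ in (0:ℝ)..t, g τ) ≤ 2 * ε / C₀ := by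
  set δ : ℝ := (C₀ / (2 * C)) ^ 2 with hδdef
  have hδpos : 0 < δ := by positivity
  have hεle : ε ≤ (C₀ / (2 * C)) ^ 2 := by
    have h1 : Real.sqrt ε ≤ C₀ / (2 * C) := by
      rw [le_div_iff₀ (by positivity)]
      linarith [hsmall, mul_comm (Real.sqrt ε) (2 * C)]
    have h2 := Real.sq_sqrt hε.le
    nlinarith [Real.sqrt_nonneg ε]
  -- bound on the coefficient under the smallness hypothesis
  have hsq : ∀ x : ℝ, x ≤ ε + δ → C * Real.sqrt x ≤ C₀ := by
    intro x hx
    have h1 : Real.sqrt x ≤ Real.sqrt (ε + δ) := Real.sqrt_le_sqrt hx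
    have h2 : Real.sqrt (ε + δ) ≤ C₀ / C := by
      rw [show (C₀ / C) = Real.sqrt ((C₀ / C) ^ 2) by
        rw [Real.sqrt_sq (by positivity)]]
      apply Real.sqrt_le_sqrt
      have e1 : δ = C₀ ^ 2 / (4 * C ^ 2) := by rw [hδdef]; field_simp; ring
      have e3 : δ + δ ≤ (C₀ / C) ^ 2 := by
        rw [e1, ← add_div, div_pow, div_le_div_iff₀ (by positivity) (by positivity)]
        nlinarith [sq_nonneg (C₀ * C)]
      have : ε ≤ δ := hεle
      linarith
    calc C * Real.sqrt x ≤ C * (C₀ / C) := by nlinarith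
      _ = C₀ := by field_simp
  -- key lemma: if f ≤ ε + δ on [0,t] then f t ≤ ε
  have L1 : ∀ t ∈ Set.Icc (0:ℝ) T, (∀ τ ∈ Set.Icc (0:ℝ) t, f τ ≤ ε + δ) → f t ≤ ε := by
    intro t ht hb
    have hI : 0 ≤ ∫ τ in (0:ℝ)..t, (C₀ - C * Real.sqrt (f τ)) * g τ := by
      apply intervalIntegral.integral_nonneg ht.1
      intro u hu
      have hgu : 0 ≤ g u := hgnn u ⟨hu.1, hu.2.trans ht.2⟩
      have := hsq (f u) (hb u hu)
      nlinarith
    have := hkey t ht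
    linarith
  -- main bound: f ≤ ε on [0,T]
  have main : ∀ t ∈ Set.Icc (0:ℝ) T, f t ≤ ε := by
    by_contra h
    push_neg at h
    obtain ⟨t₁, ht₁, hft₁⟩ := h
    by_cases hB : ∃ t ∈ Set.Icc (0:ℝ) T, ε + δ ≤ f t
    · set B := Set.Icc (0:ℝ) T ∩ f ⁻¹' Set.Ici (ε + δ) with hBdef
      have hBne : B.Nonempty := by
        obtain ⟨t, ht, hft⟩ := hB
        exact ⟨t, ht, hft⟩
      have hBclosed : IsClosed B :=
        hfc.preimage_isClosed_of_isClosed isClosed_Icc isClosed_Ici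
      have hBbdd : BddBelow B := ⟨0, fun x hx => hx.1.1⟩
      set t₂ := sInf B with ht₂def
      have ht₂B : t₂ ∈ B := hBclosed.csInf_mem hBne hBbdd
      have ht₂mem : t₂ ∈ Set.Icc (0:ℝ) T := ht₂B.1
      have hft₂ : ε + δ ≤ f t₂ := ht₂B.2
      have ht₂pos : 0 < t₂ := by
        rcases lt_or_eq_of_le ht₂mem.1 with h | h
        · exact h
        · exfalso; rw [← h] at hft₂; linarith
      have hlt : ∀ τ ∈ Set.Ico (0:ℝ) t₂, f τ ≤ ε := by
        intro τ hτ
        apply L1 τ ⟨hτ.1, hτ.2.le.trans ht₂mem.2⟩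
        intro u hu
        have huT : u ∈ Set.Icc (0:ℝ) T := ⟨hu.1, (hu.2.trans hτ.2.le).trans ht₂mem.2⟩
        have hunB : u ∉ B := by
          intro huB
          exact absurd (csInf_le hBbdd huB) (not_le.mpr (lt_of_le_of_lt hu.2 hτ.2))
        have : ¬ (ε + δ ≤ f u) := fun hc => hunB ⟨huT, hc⟩
        linarith
      -- continuity: f t₂ ≤ ε, contradiction
      have hcl : t₂ ∈ closure (Set.Ico (0:ℝ) t₂) := by
        rw [closure_Ico (ne_of_lt ht₂pos)]
        exact ⟨ht₂pos.le, le_refl _⟩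
      haveI hne : (nhdsWithin t₂ (Set.Ico (0:ℝ) t₂)).NeBot :=
        mem_closure_iff_nhdsWithin_neBot.mp hcl
      have htend : Filter.Tendsto f (nhdsWithin t₂ (Set.Ico (0:ℝ) t₂)) (nhds (f t₂)) :=
        (hfc.continuousWithinAt ht₂mem).mono
          (fun x hx => ⟨hx.1, hx.2.le.trans ht₂mem.2⟩)
      have : f t₂ ≤ ε :=
        le_of_tendsto htend (Filter.eventually_of_mem self_mem_nhdsWithin hlt)
      linarith
    · push_neg at hB
      have := L1 t₁ ht₁ (fun u hu => (hB u ⟨hu.1, hu.2.trans ht₁.2⟩).le)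
      linarith
  -- conclusions
  intro t ht
  refine ⟨main t ht, ?_⟩
  have hsub : Set.Icc (0:ℝ) t ⊆ Set.Icc (0:ℝ) T := Set.Icc_subset_Icc_right ht.2
  have hgOn : IntegrableOn g (Set.Icc 0 t) volume := hgint.mono_set hsub
  have hg_ii : IntervalIntegrable g volume 0 t := by
    rw [intervalIntegrable_iff_integrableOn_Icc_of_le ht.1]
    exact hgOn
  have hcoefc : ContinuousOn (fun τ => C₀ - C * Real.sqrt (f τ)) (Set.Icc 0 t) := by
    apply continuousOn_const.sub
    exact continuousOn_const.mul (Real.continuous_sqrt.comp_continuousOn (hfc.mono hsub))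
  have hprod_on : IntegrableOn (fun τ => (C₀ - C * Real.sqrt (f τ)) * g τ)
      (Set.Icc 0 t) volume := by
    apply Integrable.bdd_mul (c := C₀) hgOn
      (hcoefc.aestronglyMeasurable measurableSet_Icc)
    filter_upwards [ae_restrict_mem measurableSet_Icc] with u hu
    have hfu : f u ≤ ε := main u (hsub hu)
    have h1 : C * Real.sqrt (f u) ≤ C₀ := hsq (f u) (by linarith)
    have h2 : 0 ≤ C * Real.sqrt (f u) := by positivity
    rw [Real.norm_eq_abs, abs_le]
    constructor <;> linarith
  have hprod_ii : IntervalIntegrable (fun τ => (C₀ - C * Real.sqrt (f τ)) * g τ) volume 0 t := by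
    rw [intervalIntegrable_iff_integrableOn_Icc_of_le ht.1]
    exact hprod_on
  have hmono : ∫ τ in (0:ℝ)..t, (C₀ / 2) * g τ
      ≤ ∫ τ in (0:ℝ)..t, (C₀ - C * Real.sqrt (f τ)) * g τ := by
    apply intervalIntegral.integral_mono_on ht.1 (hg_ii.const_mul _) hprod_ii
    intro u hu
    have huT : u ∈ Set.Icc (0:ℝ) T := hsub hu
    have hfu : f u ≤ ε := main u huT
    have hgu : 0 ≤ g u := hgnn u huT
    have h1 : Real.sqrt (f u) ≤ Real.sqrt ε := Real.sqrt_le_sqrt hfu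
    have h2 : C * Real.sqrt (f u) ≤ C₀ / 2 := by nlinarith
    nlinarith
  rw [intervalIntegral.integral_const_mul] at hmono
  have hkey' := hkey t ht
  have hfnt := hfnn t ht
  have hfin : (C₀ / 2) * ∫ τ in (0:ℝ)..t, g τ ≤ ε := by linarith
  rw [le_div_iff₀ hC₀]
  linarith
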